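/- Let A₁ be the complex symmetric matrix with rows (0,1,0),(1,0,0),(0,0,0) and A₂ the one with rows (0,0,1),(0,0,0),(1,0,0), and let Z₀ := span_ℂ{A₁, A₂} be the 2-dimensional complex subspace they span inside the symmetric complex 3×3 matrices. For B in SU(3), the following are equivalent: (i) B·X·Bᵀ ∈ Z₀ for every X ∈ Z₀; (ii) the entries of B satisfy b₁₂ = b₁₃ = b₂₁ = b₃₁ = 0, i.e. B leaves ℂ·e₁ and ℂ·e₂ ⊕ ℂ·e₃ invariant (so B belongs to S(U(1)×U(2))). (Consequently, the isotropy group of Z₀ under the Cartan representation of SU(3) is isomorphic to S(U(1)×U(2)).) -/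
import Mathlib


open Matrix

/-- `A₁`, the symmetric matrix with rows `(0,1,0),(1,0,0),(0,0,0)`. -/
noncomputable def A₁ : Matrix (Fin 3) (Fin 3) ℂ := !![0, 1, 0; 1, 0, 0; 0, 0, 0]

/-- `A₂`, the symmetric matrix with rows `(0,0,1),(0,0,0),(1,0,0)`. -/
noncomputable def A₂ : Matrix (Fin 3) (Fin 3) ℂ := !![0, 0, 1; 0, 0, 0; 1, 0, 0]

/-- `Z₀ = span_ℂ{A₁, A₂}`, a complex plane inside the symmetric complex 3×3 matrices. -/
noncomputable def Z₀ : Submodule ℂ (Matrix (Fin 3) (Fin 3) ℂ) :=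
  Submodule.span ℂ {A₁, A₂}

/-- For `B ∈ SU(3)`, the Cartan action `X ↦ B·X·Bᵀ` maps `Z₀ = span{A₁,A₂}` into itself if and
only if `b₁₂ = b₁₃ = b₂₁ = b₃₁ = 0`, i.e. `B ∈ S(U(1)×U(2))`.  (Hence the isotropy group of `Z₀`
is isomorphic to `S(U(1)×U(2))`.) -/
theorem isotropy_SU3_at_Z₀
    (B : Matrix (Fin 3) (Fin 3) ℂ) (hB : B * B.conjTranspose = 1) (hdet : B.det = 1) :
    (∀ X ∈ Z₀, B * X * Bᵀ ∈ Z₀) ↔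
      (B 0 1 = 0 ∧ B 0 2 = 0 ∧ B 1 0 = 0 ∧ B 2 0 = 0) := by
  constructor
  · intro h
    -- unitarity equations
    have u10 : B 1 0 * star (B 0 0) + B 1 1 * star (B 0 1) + B 1 2 * star (B 0 2) = 0 := by
      have := congrFun (congrFun hB 1) 0
      simpa [Matrix.mul_apply, Fin.sum_univ_three, Matrix.one_apply,
        Matrix.conjTranspose_apply] using this
    have u20 : B 2 0 * star (B 0 0) + B 2 1 * star (B 0 1) + B 2 2 * star (B 0 2) = 0 := by
      have := congrFun (congrFun hB 2) 0
      simpa [Matrix.mul_apply, Fin.sum_univ_three, Matrix.one_apply,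
        Matrix.conjTranspose_apply] using this
    -- membership of images of A₁, A₂
    have hA1 : A₁ ∈ Z₀ := Submodule.subset_span (by simp)
    have hA2 : A₂ ∈ Z₀ := Submodule.subset_span (by simp)
    obtain ⟨x, y, hxy⟩ := Submodule.mem_span_pair.mp (h A₁ hA1)
    obtain ⟨z, w, hzw⟩ := Submodule.mem_span_pair.mp (h A₂ hA2)
    -- entry equations from B A₁ Bᵀ
    have e1 : B 0 0 * B 0 1 = 0 := by
      have := congrFun (congrFun hxy 0) 0
      simp [A₁, A₂, Matrix.mul_apply, Fin.sum_univ_three, Matrix.vecHead, Matrix.vecTail] at this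
      linear_combination -this / 2
    have e2 : B 1 0 * B 1 1 = 0 := by
      have := congrFun (congrFun hxy 1) 1
      simp [A₁, A₂, Matrix.mul_apply, Fin.sum_univ_three, Matrix.vecHead, Matrix.vecTail] at this
      linear_combination -this / 2
    have e3 : B 2 0 * B 2 1 = 0 := by
      have := congrFun (congrFun hxy 2) 2
      simp [A₁, A₂, Matrix.mul_apply, Fin.sum_univ_three, Matrix.vecHead, Matrix.vecTail] at this
      linear_combination -this / 2
    have e4 : B 1 0 * B 2 1 + B 1 1 * B 2 0 = 0 := by
      have := congrFun (congrFun hxy 1) 2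
      simp [A₁, A₂, Matrix.mul_apply, Fin.sum_univ_three, Matrix.vecHead, Matrix.vecTail] at this
      linear_combination -this
    have e5 : B 0 0 * B 0 2 = 0 := by
      have := congrFun (congrFun hzw 0) 0
      simp [A₁, A₂, Matrix.mul_apply, Fin.sum_univ_three, Matrix.vecHead, Matrix.vecTail] at this
      linear_combination -this / 2
    have e6 : B 1 0 * B 1 2 = 0 := by
      have := congrFun (congrFun hzw 1) 1
      simp [A₁, A₂, Matrix.mul_apply, Fin.sum_univ_three, Matrix.vecHead, Matrix.vecTail] at this
      linear_combination -this / 2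
    have e7 : B 2 0 * B 2 2 = 0 := by
      have := congrFun (congrFun hzw 2) 2
      simp [A₁, A₂, Matrix.mul_apply, Fin.sum_univ_three, Matrix.vecHead, Matrix.vecTail] at this
      linear_combination -this / 2
    have e8 : B 1 0 * B 2 2 + B 1 2 * B 2 0 = 0 := by
      have := congrFun (congrFun hzw 1) 2
      simp [A₁, A₂, Matrix.mul_apply, Fin.sum_univ_three, Matrix.vecHead, Matrix.vecTail] at this
      linear_combination -this
    have hd := hdet
    rw [Matrix.det_fin_three] at hd
    by_cases h00 : B 0 0 = 0
    · -- derive a contradiction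
      exfalso
      by_cases h10 : B 1 0 = 0
      · by_cases h20 : B 2 0 = 0
        · -- first column zero, det = 0
          rw [h00, h10, h20] at hd
          simp at hd
        · have h21 : B 2 1 = 0 := by
            rcases mul_eq_zero.mp e3 with h | h; exact absurd h h20; exact h
          have h22 : B 2 2 = 0 := by
            rcases mul_eq_zero.mp e7 with h | h; exact absurd h h20; exact h
          have h11 : B 1 1 = 0 := by
            have : B 1 1 * B 2 0 = 0 := by linear_combination e4 - B 2 1 * h10
            rcases mul_eq_zero.mp this with h | h; exact h; exact absurd h h20
          have h12 : B 1 2 = 0 := by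
            have : B 1 2 * B 2 0 = 0 := by linear_combination e8 - h10 * B 2 2
            rcases mul_eq_zero.mp this with h | h; exact h; exact absurd h h20
          rw [h00, h10, h21, h22, h11, h12] at hd
          simp at hd
      · have h11 : B 1 1 = 0 := by
          rcases mul_eq_zero.mp e2 with h | h; exact absurd h h10; exact h
        have h12 : B 1 2 = 0 := by
          rcases mul_eq_zero.mp e6 with h | h; exact absurd h h10; exact h
        have h21 : B 2 1 = 0 := by
          have : B 1 0 * B 2 1 = 0 := by linear_combination e4 - h11 * B 2 0
          rcases mul_eq_zero.mp this with h | h; exact absurd h h10; exact h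
        have h22 : B 2 2 = 0 := by
          have : B 1 0 * B 2 2 = 0 := by linear_combination e8 - h12 * B 2 0
          rcases mul_eq_zero.mp this with h | h; exact absurd h h10; exact h
        rw [h00, h11, h12, h21, h22] at hd
        simp at hd
    · have h01 : B 0 1 = 0 := by
        rcases mul_eq_zero.mp e1 with h | h; exact absurd h h00; exact h
      have h02 : B 0 2 = 0 := by
        rcases mul_eq_zero.mp e5 with h | h; exact absurd h h00; exact h
      have hs00 : star (B 0 0) ≠ 0 := star_ne_zero.mpr h00
      have h10 : B 1 0 = 0 := by
        have : B 1 0 * star (B 0 0) = 0 := by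
          rw [h01, h02] at u10; simpa using u10
        rcases mul_eq_zero.mp this with h | h; exact h; exact absurd h hs00
      have h20 : B 2 0 = 0 := by
        have : B 2 0 * star (B 0 0) = 0 := by
          rw [h01, h02] at u20; simpa using u20
        rcases mul_eq_zero.mp this with h | h; exact h; exact absurd h hs00
      exact ⟨h01, h02, h10, h20⟩
  · rintro ⟨h01, h02, h10, h20⟩ X hX
    have key1 : B * A₁ * Bᵀ = (B 0 0 * B 1 1) • A₁ + (B 0 0 * B 2 1) • A₂ := by
      ext i j
      fin_cases i <;> fin_cases j <;>
        simp [A₁, A₂, Matrix.mul_apply, Fin.sum_univ_three, Matrix.vecHead, Matrix.vecTail, h01, h02, h10, h20] <;> ring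
    have key2 : B * A₂ * Bᵀ = (B 0 0 * B 1 2) • A₁ + (B 0 0 * B 2 2) • A₂ := by
      ext i j
      fin_cases i <;> fin_cases j <;>
        simp [A₁, A₂, Matrix.mul_apply, Fin.sum_univ_three, Matrix.vecHead, Matrix.vecTail, h01, h02, h10, h20] <;> ring
    induction hX using Submodule.span_induction with
    | mem M hM =>
      rcases hM with hM | hM
      · rw [hM, key1]
        exact Z₀.add_mem (Z₀.smul_mem _ (Submodule.subset_span (by simp)))
          (Z₀.smul_mem _ (Submodule.subset_span (by simp)))
      · rw [Set.mem_singleton_iff.mp hM, key2]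
        exact Z₀.add_mem (Z₀.smul_mem _ (Submodule.subset_span (by simp)))
          (Z₀.smul_mem _ (Submodule.subset_span (by simp)))
    | zero => simp
    | add M N _ _ hM hN =>
      have : B * (M + N) * Bᵀ = B * M * Bᵀ + B * N * Bᵀ := by
        rw [Matrix.mul_add, Matrix.add_mul]
      rw [this]; exact Z₀.add_mem hM hN
    | smul c M _ hM =>
      have : B * (c • M) * Bᵀ = c • (B * M * Bᵀ) := by
        rw [Matrix.mul_smul, Matrix.smul_mul]
      rw [this]; exact Z₀.smul_mem c hM
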